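/- Let d ≥ 1, let M be a positive integer with M ≥ 2, and let J, g : ℤ^d → ℝ be ℤ^d-symmetric with Σ_x |x|^M (|J(x)| + |g(x)|) < ∞, Ĵ(0) = Σ_x J(x) = 1, and Ĵ(0) − Ĵ(k) ≥ K₀|k|²/(2d) for all k ∈ [−π,π]^d, for some K₀ > 0. Define Ĝ(k) = ĝ(k)/(1 − Ĵ(k)) for k ∈ [−π,π]^d, k ≠ 0. Then for every integer m with 1 ≤ m ≤ M there is a finite constant c (depending on m, d, K₀ and the moments of J and g) such that |∂₁^m Ĝ(k)| ≤ c/|k|^{2+m} for all k ∈ [−π,π]^d with k ≠ 0, where ∂₁ = ∂/∂k₁. -/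

import Mathlib

open MeasureTheory Filter

noncomputable section

/-- The odd kernel
`L_{o,ε}(p) = (2πi Γ(ε))⁻¹ ∫_0^∞ t^{ε-1} sin p / (cosh t - cos p) dt`. -/
def Lo (ε : ℝ) (p : ℝ) : ℂ :=
  (2 * (Real.pi : ℂ) * Complex.I * (Real.Gamma ε : ℂ))⁻¹ *
    ((∫ t in Set.Ioi (0 : ℝ),
        t ^ (ε - 1) * Real.sin p / (Real.cosh t - Real.cos p) : ℝ) : ℂ)

/-- The even kernel
`L_{e,ε}(p) = (2π Γ(ε))⁻¹ ∫_0^∞ t^{ε-1} (cos p - e^{-t}) / (cosh t - cos p) dt`. -/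
def Le (ε : ℝ) (p : ℝ) : ℂ :=
  (2 * (Real.pi : ℂ) * (Real.Gamma ε : ℂ))⁻¹ *
    ((∫ t in Set.Ioi (0 : ℝ),
        t ^ (ε - 1) * (Real.cos p - Real.exp (-t)) / (Real.cosh t - Real.cos p) : ℝ) : ℂ)

/-- Inner product `k·x` for `ℤ^{1+m}` in split coordinates `(x₁, x⃗)`. -/
def dotS {m : ℕ} (k : ℝ × (Fin m → ℝ)) (x : ℤ × (Fin m → ℤ)) : ℝ :=
  k.1 * (x.1 : ℝ) + ∑ i, k.2 i * (x.2 i : ℝ)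

/-- Euclidean norm of `k = (k₁, k⃗) ∈ ℝ^{1+m}`. -/
def normS {m : ℕ} (k : ℝ × (Fin m → ℝ)) : ℝ :=
  Real.sqrt (k.1 ^ 2 + ∑ i, (k.2 i) ^ 2)

/-- Euclidean norm of `k⃗ ∈ ℝ^m`. -/
def normV {m : ℕ} (kv : Fin m → ℝ) : ℝ := Real.sqrt (∑ i, (kv i) ^ 2)

/-- Euclidean norm of `x = (x₁, x⃗) ∈ ℤ^{1+m}`. -/
def normZS {m : ℕ} (x : ℤ × (Fin m → ℤ)) : ℝ :=
  Real.sqrt ((x.1 : ℝ) ^ 2 + ∑ i, ((x.2 i : ℝ)) ^ 2)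

/-- The box `[-π,π]^{1+m}` in split coordinates. -/
def boxS (m : ℕ) : Set (ℝ × (Fin m → ℝ)) :=
  (Set.Icc (-Real.pi) Real.pi) ×ˢ
    (Set.Icc (fun _ => -Real.pi) (fun _ => Real.pi))

/-- The box `[-π,π]^m`. -/
def boxV (m : ℕ) : Set (Fin m → ℝ) :=
  Set.Icc (fun _ => -Real.pi) (fun _ => Real.pi)

/-- `ℤ^{1+m}`-symmetry in split coordinates: invariance under reflection of any
coordinate and under permutations of the coordinates (including swapping the
first coordinate with any other). -/
def ZdSymmS {m : ℕ} (f : ℤ × (Fin m → ℤ) → ℝ) : Prop :=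
  (∀ x : ℤ × (Fin m → ℤ), f (-x.1, x.2) = f x) ∧
  (∀ (x : ℤ × (Fin m → ℤ)) (i : Fin m),
    f (x.1, Function.update x.2 i (-(x.2 i))) = f x) ∧
  (∀ (x : ℤ × (Fin m → ℤ)) (σ : Equiv.Perm (Fin m)),
    f (x.1, fun i => x.2 (σ i)) = f x) ∧
  (∀ (x : ℤ × (Fin m → ℤ)) (i : Fin m),
    f (x.2 i, Function.update x.2 i x.1) = f x)

/-- The Fourier transform `f̂(k) = Σ_x f(x) e^{-ik·x}` (real, via cosine, for
`ℤ^d`-symmetric `f`), in split coordinates. -/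
def JhatS {m : ℕ} (J : ℤ × (Fin m → ℤ) → ℝ) (k : ℝ × (Fin m → ℝ)) : ℝ :=
  ∑' x : ℤ × (Fin m → ℤ), J x * Real.cos (dotS k x)

/-- `Ĝ(k) = ĝ(k)/(1 - Ĵ(k))`. -/
def GhatS {m : ℕ} (J g : ℤ × (Fin m → ℤ) → ℝ) (k : ℝ × (Fin m → ℝ)) : ℝ :=
  JhatS g k / (1 - JhatS J k)

namespace GhatAux

open Real Finset

variable {d' : ℕ}

/-- Phase contribution of the last `d'` coordinates. -/
def bvec (kv : Fin d' → ℝ) (x : ℤ × (Fin d' → ℤ)) : ℝ := ∑ i, kv i * (x.2 i : ℝ)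

/-- The `j`-th termwise-differentiated cosine series. -/
def Sser (f : ℤ × (Fin d' → ℤ) → ℝ) (kv : Fin d' → ℝ) (j : ℕ) (t : ℝ) : ℝ :=
  ∑' x : ℤ × (Fin d' → ℤ),
    f x * (x.1 : ℝ) ^ j * Real.cos (t * (x.1 : ℝ) + bvec kv x + (j : ℝ) * (Real.pi / 2))

/-- The `j`-th absolute moment in the first coordinate. -/
def Cmom (f : ℤ × (Fin d' → ℤ) → ℝ) (j : ℕ) : ℝ :=
  ∑' x : ℤ × (Fin d' → ℤ), |f x| * |(x.1 : ℝ)| ^ j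

lemma abs_fst_le_normZS (x : ℤ × (Fin d' → ℤ)) : |(x.1 : ℝ)| ≤ normZS x := by
  rw [normZS, ← Real.sqrt_sq_eq_abs]
  apply Real.sqrt_le_sqrt
  have : (0:ℝ) ≤ ∑ i, ((x.2 i : ℝ)) ^ 2 := Finset.sum_nonneg fun i _ => sq_nonneg _
  linarith

lemma normZS_nonneg (x : ℤ × (Fin d' → ℤ)) : 0 ≤ normZS x := Real.sqrt_nonneg _

lemma one_le_normZS {x : ℤ × (Fin d' → ℤ)} (hx : x ≠ 0) : 1 ≤ normZS x := by
  rw [normZS, show (1:ℝ) = Real.sqrt 1 by rw [Real.sqrt_one]]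
  apply Real.sqrt_le_sqrt
  by_cases h1 : x.1 = 0
  · have h2 : x.2 ≠ 0 := by
      intro h2; exact hx (Prod.ext h1 h2)
    obtain ⟨i, hi⟩ := Function.ne_iff.mp h2
    have hi' : (1:ℝ) ≤ |(x.2 i : ℝ)| := by
      have := Int.one_le_abs hi
      calc (1:ℝ) = ((1:ℤ):ℝ) := by norm_num
        _ ≤ ((|x.2 i| : ℤ) : ℝ) := by exact_mod_cast this
        _ = |(x.2 i : ℝ)| := by push_cast; ring
    have hsq : (1:ℝ) ≤ ((x.2 i : ℝ)) ^ 2 := by nlinarith [sq_abs ((x.2 i : ℝ))]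
    have hsum : ((x.2 i : ℝ)) ^ 2 ≤ ∑ j, ((x.2 j : ℝ)) ^ 2 :=
      Finset.single_le_sum (f := fun j => ((x.2 j : ℝ)) ^ 2) (fun j _ => sq_nonneg _)
        (Finset.mem_univ i)
    nlinarith [sq_nonneg ((x.1 : ℝ))]
  · have hi' : (1:ℝ) ≤ |(x.1 : ℝ)| := by
      have := Int.one_le_abs h1
      calc (1:ℝ) = ((1:ℤ):ℝ) := by norm_num
        _ ≤ ((|x.1| : ℤ) : ℝ) := by exact_mod_cast this
        _ = |(x.1 : ℝ)| := by push_cast; ring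
    have hsq : (1:ℝ) ≤ ((x.1 : ℝ)) ^ 2 := by nlinarith [sq_abs ((x.1 : ℝ))]
    have : (0:ℝ) ≤ ∑ j, ((x.2 j : ℝ)) ^ 2 := Finset.sum_nonneg fun j _ => sq_nonneg _
    linarith

lemma summable_abs_mul_pow {M : ℕ} {f : ℤ × (Fin d' → ℤ) → ℝ}
    (hf : Summable fun x : ℤ × (Fin d' → ℤ) => normZS x ^ M * |f x|) {j : ℕ} (hj : j ≤ M) :
    Summable fun x : ℤ × (Fin d' → ℤ) => |f x| * |(x.1 : ℝ)| ^ j := by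
  have hδ : Summable (fun x : ℤ × (Fin d' → ℤ) => if x = 0 then |f 0| else 0) := by
    apply summable_of_ne_finset_zero (s := {(0 : ℤ × (Fin d' → ℤ))})
    intro b hb
    simp only [Finset.mem_singleton] at hb
    simp [hb]
  apply Summable.of_nonneg_of_le
    (fun x => mul_nonneg (abs_nonneg _) (pow_nonneg (abs_nonneg _) _)) ?_ (hf.add hδ)
  intro x
  by_cases hx : x = 0
  · subst hx
    rw [if_pos rfl]
    have h0 : |((0 : ℤ × (Fin d' → ℤ)).1 : ℝ)| ^ j ≤ 1 := by
      simp only [Prod.fst_zero, Int.cast_zero, abs_zero]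
      exact pow_le_one₀ le_rfl zero_le_one
    have h2 := mul_le_mul_of_nonneg_left h0 (abs_nonneg (f 0))
    have h1 : (0:ℝ) ≤ normZS (0 : ℤ × (Fin d' → ℤ)) ^ M * |f 0| :=
      mul_nonneg (pow_nonneg (normZS_nonneg _) _) (abs_nonneg _)
    rw [mul_one] at h2
    linarith
  · rw [if_neg hx]
    have h1 : |(x.1 : ℝ)| ^ j ≤ normZS x ^ j :=
      pow_le_pow_left₀ (abs_nonneg _) (abs_fst_le_normZS x) j
    have h2 : normZS x ^ j ≤ normZS x ^ M := pow_le_pow_right₀ (one_le_normZS hx) hj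
    have : |f x| * |(x.1 : ℝ)| ^ j ≤ normZS x ^ M * |f x| := by
      rw [mul_comm (normZS x ^ M)]
      exact mul_le_mul_of_nonneg_left (h1.trans h2) (abs_nonneg _)
    linarith

lemma term_norm_le (f : ℤ × (Fin d' → ℤ) → ℝ) (j : ℕ) (u : ℝ) (x : ℤ × (Fin d' → ℤ)) :
    ‖f x * (x.1 : ℝ) ^ j * Real.cos u‖ ≤ |f x| * |(x.1 : ℝ)| ^ j := by
  rw [Real.norm_eq_abs, abs_mul, abs_mul, abs_pow]
  exact mul_le_of_le_one_right (by positivity) (Real.abs_cos_le_one u)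

lemma hasDerivAt_Sser (f : ℤ × (Fin d' → ℤ) → ℝ) (kv : Fin d' → ℝ) {j : ℕ}
    (hs1 : Summable fun x : ℤ × (Fin d' → ℤ) => |f x| * |(x.1 : ℝ)| ^ (j+1))
    (hs0 : Summable fun x : ℤ × (Fin d' → ℤ) => |f x| * |(x.1 : ℝ)| ^ j) (t : ℝ) :
    HasDerivAt (Sser f kv j) (Sser f kv (j+1) t) t := by
  have H := hasDerivAt_tsum (u := fun x : ℤ × (Fin d' → ℤ) => |f x| * |(x.1 : ℝ)| ^ (j+1))
    (g := fun x s => f x * (x.1 : ℝ) ^ j *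
      Real.cos (s * (x.1 : ℝ) + bvec kv x + (j : ℝ) * (Real.pi / 2)))
    (g' := fun x s => f x * (x.1 : ℝ) ^ (j+1) *
      Real.cos (s * (x.1 : ℝ) + bvec kv x + ((j+1 : ℕ) : ℝ) * (Real.pi / 2)))
    (y₀ := (0 : ℝ)) hs1 ?_ ?_ ?_ t
  · exact H
  · intro x s
    have h1 : HasDerivAt (fun s : ℝ => s * (x.1 : ℝ) + bvec kv x + (j : ℝ) * (Real.pi / 2))
        (x.1 : ℝ) s := ((hasDerivAt_mul_const _).add_const _).add_const _
    have h2 := (h1.cos).const_mul (f x * (x.1 : ℝ) ^ j)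
    convert h2 using 1
    show f x * (x.1 : ℝ) ^ (j+1) *
        Real.cos (s * (x.1 : ℝ) + bvec kv x + ((j+1 : ℕ) : ℝ) * (Real.pi / 2)) = _
    have harg : s * (x.1 : ℝ) + bvec kv x + ((j+1 : ℕ) : ℝ) * (Real.pi / 2)
        = (s * (x.1 : ℝ) + bvec kv x + (j : ℝ) * (Real.pi / 2)) + Real.pi / 2 := by
      push_cast; ring
    rw [harg, Real.cos_add_pi_div_two]
    ring
    rfl
  · intro x s; exact term_norm_le f (j+1) _ x
  · exact Summable.of_norm_bounded hs0 fun x => term_norm_le f j _ x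

lemma deriv_Sser (f : ℤ × (Fin d' → ℤ) → ℝ) (kv : Fin d' → ℝ) {j : ℕ}
    (hs1 : Summable fun x : ℤ × (Fin d' → ℤ) => |f x| * |(x.1 : ℝ)| ^ (j+1))
    (hs0 : Summable fun x : ℤ × (Fin d' → ℤ) => |f x| * |(x.1 : ℝ)| ^ j) :
    deriv (Sser f kv j) = Sser f kv (j+1) :=
  funext fun t => (hasDerivAt_Sser f kv hs1 hs0 t).deriv

lemma iteratedDeriv_Sser (f : ℤ × (Fin d' → ℤ) → ℝ) (kv : Fin d' → ℝ) {M : ℕ}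
    (hs : ∀ j, j ≤ M → Summable fun x : ℤ × (Fin d' → ℤ) => |f x| * |(x.1 : ℝ)| ^ j) :
    ∀ (n j : ℕ), j + n ≤ M → iteratedDeriv n (Sser f kv j) = Sser f kv (j + n) := by
  intro n
  induction n with
  | zero => intro j _; simp [iteratedDeriv_zero]
  | succ n ihn =>
    intro j h
    rw [show j + (n+1) = (j+1) + n from by omega, iteratedDeriv_succ',
      deriv_Sser f kv (hs (j+1) (by omega)) (hs j (by omega)), ihn (j+1) (by omega)]

lemma continuous_Sser (f : ℤ × (Fin d' → ℤ) → ℝ) (kv : Fin d' → ℝ) {j : ℕ}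
    (hs0 : Summable fun x : ℤ × (Fin d' → ℤ) => |f x| * |(x.1 : ℝ)| ^ j) :
    Continuous (Sser f kv j) := by
  apply continuous_tsum (u := fun x : ℤ × (Fin d' → ℤ) => |f x| * |(x.1 : ℝ)| ^ j) ?_ hs0 ?_
  · intro x
    apply Continuous.mul continuous_const
    apply Real.continuous_cos.comp
    fun_prop
  · intro x s; exact term_norm_le f j _ x

lemma contDiff_Sser (f : ℤ × (Fin d' → ℤ) → ℝ) (kv : Fin d' → ℝ) {M : ℕ}
    (hs : ∀ j, j ≤ M → Summable fun x : ℤ × (Fin d' → ℤ) => |f x| * |(x.1 : ℝ)| ^ j) :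
    ∀ (n j : ℕ), j + n ≤ M → ContDiff ℝ (n : ℕ) (Sser f kv j) := by
  intro n
  induction n with
  | zero =>
    intro j h
    rw [show ((0:ℕ) : WithTop ℕ∞) = 0 by norm_cast]
    exact contDiff_zero.mpr (continuous_Sser f kv (hs j (by omega)))
  | succ n ihn =>
    intro j h
    rw [show (((n+1 : ℕ)) : WithTop ℕ∞) = (n : ℕ) + 1 by push_cast; rfl]
    rw [contDiff_succ_iff_deriv]
    refine ⟨fun t => (hasDerivAt_Sser f kv (hs (j+1) (by omega)) (hs j (by omega)) t).differentiableAt, ?_, ?_⟩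
    · intro hω; exact absurd hω (by simp)
    · rw [deriv_Sser f kv (hs (j+1) (by omega)) (hs j (by omega))]
      exact ihn (j+1) (by omega)

lemma Cmom_nonneg (f : ℤ × (Fin d' → ℤ) → ℝ) (j : ℕ) : 0 ≤ Cmom f j :=
  tsum_nonneg fun x => by positivity

lemma abs_Sser_le (f : ℤ × (Fin d' → ℤ) → ℝ) (kv : Fin d' → ℝ) {j : ℕ}
    (hs0 : Summable fun x : ℤ × (Fin d' → ℤ) => |f x| * |(x.1 : ℝ)| ^ j) (t : ℝ) :
    |Sser f kv j t| ≤ Cmom f j := by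
  have hsn : Summable fun x : ℤ × (Fin d' → ℤ) =>
      ‖f x * (x.1 : ℝ) ^ j * Real.cos (t * (x.1 : ℝ) + bvec kv x + (j:ℝ) * (Real.pi/2))‖ :=
    Summable.of_nonneg_of_le (fun x => norm_nonneg _) (fun x => term_norm_le f j _ x) hs0
  calc |Sser f kv j t| ≤ ∑' x : ℤ × (Fin d' → ℤ),
        ‖f x * (x.1 : ℝ) ^ j * Real.cos (t * (x.1 : ℝ) + bvec kv x + (j:ℝ) * (Real.pi/2))‖ := by
        rw [Sser, ← Real.norm_eq_abs]
        exact norm_tsum_le_tsum_norm hsn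
    _ ≤ Cmom f j := Summable.tsum_le_tsum (fun x => term_norm_le f j _ x) hsn hs0

lemma abs_Sser_one_le (f : ℤ × (Fin d' → ℤ) → ℝ) (kv : Fin d' → ℝ)
    (hsym : ∀ x : ℤ × (Fin d' → ℤ), f (-x.1, x.2) = f x)
    (hs1 : Summable fun x : ℤ × (Fin d' → ℤ) => |f x| * |(x.1 : ℝ)| ^ 1)
    (hs2 : Summable fun x : ℤ × (Fin d' → ℤ) => |f x| * |(x.1 : ℝ)| ^ 2)
    (t : ℝ) : |Sser f kv 1 t| ≤ Cmom f 2 * |t| := by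
  set A : ℤ × (Fin d' → ℤ) → ℝ := fun x =>
    -(f x * (x.1 : ℝ) * Real.sin (t * (x.1 : ℝ)) * Real.cos (bvec kv x)) with hA
  set B : ℤ × (Fin d' → ℤ) → ℝ := fun x =>
    -(f x * (x.1 : ℝ) * Real.cos (t * (x.1 : ℝ)) * Real.sin (bvec kv x)) with hB
  have habsA : ∀ x, |A x| ≤ |f x| * |(x.1 : ℝ)| ^ 1 := by
    intro x
    rw [hA]
    simp only [abs_neg, abs_mul, pow_one]
    calc |f x| * |(x.1:ℝ)| * |Real.sin (t * (x.1:ℝ))| * |Real.cos (bvec kv x)|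
        ≤ |f x| * |(x.1:ℝ)| * 1 * 1 := by
          gcongr
          · exact Real.abs_sin_le_one _
          · exact Real.abs_cos_le_one _
      _ = |f x| * |(x.1:ℝ)| := by ring
  have habsB : ∀ x, |B x| ≤ |f x| * |(x.1 : ℝ)| ^ 1 := by
    intro x
    rw [hB]
    simp only [abs_neg, abs_mul, pow_one]
    calc |f x| * |(x.1:ℝ)| * |Real.cos (t * (x.1:ℝ))| * |Real.sin (bvec kv x)|
        ≤ |f x| * |(x.1:ℝ)| * 1 * 1 := by
          gcongr
          · exact Real.abs_cos_le_one _
          · exact Real.abs_sin_le_one _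
      _ = |f x| * |(x.1:ℝ)| := by ring
  have hsA : Summable A := by
    apply Summable.of_norm_bounded hs1
    intro x; rw [Real.norm_eq_abs]; exact habsA x
  have hsB : Summable B := by
    apply Summable.of_norm_bounded hs1
    intro x; rw [Real.norm_eq_abs]; exact habsB x
  have hterm : ∀ x : ℤ × (Fin d' → ℤ),
      f x * (x.1 : ℝ) ^ 1 * Real.cos (t * (x.1:ℝ) + bvec kv x + ((1:ℕ):ℝ) * (Real.pi / 2))
        = A x + B x := by
    intro x
    rw [show t * (x.1:ℝ) + bvec kv x + ((1:ℕ):ℝ) * (Real.pi / 2)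
        = (t * (x.1:ℝ) + bvec kv x) + Real.pi / 2 by push_cast; ring,
      Real.cos_add_pi_div_two, Real.sin_add, hA, hB]
    ring
  have hSeq : Sser f kv 1 t = (∑' x, A x) + (∑' x, B x) := by
    rw [Sser, tsum_congr hterm, Summable.tsum_add hsA hsB]
  have hB0 : (∑' x, B x) = 0 := by
    have he := ((Equiv.neg ℤ).prodCongr (Equiv.refl (Fin d' → ℤ))).tsum_eq B
    have hBe : ∀ x : ℤ × (Fin d' → ℤ),
        B (((Equiv.neg ℤ).prodCongr (Equiv.refl (Fin d' → ℤ))) x) = -(B x) := by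
      intro x
      have hx2 : (((Equiv.neg ℤ).prodCongr (Equiv.refl (Fin d' → ℤ))) x) = (-x.1, x.2) := rfl
      rw [hx2]
      simp only [hB]
      have hbv : bvec kv (-x.1, x.2) = bvec kv x := rfl
      simp only [hsym x, hbv]
      push_cast
      have harg : t * -((x.1 : ℝ)) = -(t * (x.1 : ℝ)) := by ring
      rw [harg, Real.cos_neg]
      ring
    have hkey : (∑' x, B x) = -(∑' x, B x) := by
      conv_lhs => rw [← he]
      rw [tsum_congr hBe, tsum_neg]
    linarith
  have hAbound : |∑' x, A x| ≤ Cmom f 2 * |t| := by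
    have hbnd : ∀ x : ℤ × (Fin d' → ℤ), ‖A x‖ ≤ (|f x| * |(x.1:ℝ)| ^ 2) * |t| := by
      intro x
      rw [Real.norm_eq_abs, hA]
      simp only [abs_neg, abs_mul]
      have hsin : |Real.sin (t * (x.1:ℝ))| ≤ |t| * |(x.1:ℝ)| := by
        rw [← abs_mul]; exact Real.abs_sin_le_abs
      calc |f x| * |(x.1:ℝ)| * |Real.sin (t * (x.1:ℝ))| * |Real.cos (bvec kv x)|
          ≤ |f x| * |(x.1:ℝ)| * (|t| * |(x.1:ℝ)|) * 1 := by
            gcongr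
            exact Real.abs_cos_le_one _
        _ = (|f x| * |(x.1:ℝ)| ^ 2) * |t| := by ring
    have hsr : Summable fun x : ℤ × (Fin d' → ℤ) => (|f x| * |(x.1:ℝ)| ^ 2) * |t| :=
      hs2.mul_right _
    have hsn : Summable fun x => ‖A x‖ :=
      Summable.of_nonneg_of_le (fun x => norm_nonneg _) hbnd hsr
    calc |∑' x, A x| ≤ ∑' x, ‖A x‖ := by
          rw [← Real.norm_eq_abs]; exact norm_tsum_le_tsum_norm hsn
      _ ≤ ∑' x, (|f x| * |(x.1:ℝ)| ^ 2) * |t| := Summable.tsum_le_tsum hbnd hsn hsr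
      _ = Cmom f 2 * |t| := by rw [tsum_mul_right]; rfl
  rw [hSeq, hB0, add_zero]
  exact hAbound

/-- Local Leibniz helpers -/

lemma iteratedDeriv_add_of_isOpen {U : Set ℝ} (hU : IsOpen U) :
    ∀ (n : ℕ) (f g : ℝ → ℝ), ContDiffOn ℝ (n : ℕ) f U → ContDiffOn ℝ (n : ℕ) g U →
      ∀ x ∈ U, iteratedDeriv n (fun t => f t + g t) x
        = iteratedDeriv n f x + iteratedDeriv n g x := by
  intro n
  induction n with
  | zero => intro f g _ _ x _; simp [iteratedDeriv_zero]
  | succ n ihn =>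
    intro f g hf hg x hx
    have h1 : (1 : WithTop ℕ∞) ≤ ((n+1 : ℕ) : WithTop ℕ∞) := by
      exact_mod_cast Nat.one_le_iff_ne_zero.mpr (Nat.succ_ne_zero n)
    have hfd : ∀ y ∈ U, DifferentiableAt ℝ f y := fun y hy =>
      ((hf.of_le h1).differentiableOn one_ne_zero).differentiableAt (hU.mem_nhds hy)
    have hgd : ∀ y ∈ U, DifferentiableAt ℝ g y := fun y hy =>
      ((hg.of_le h1).differentiableOn one_ne_zero).differentiableAt (hU.mem_nhds hy)
    have hd : deriv (fun t => f t + g t) =ᶠ[nhds x] fun t => deriv f t + deriv g t := by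
      filter_upwards [hU.mem_nhds hx] with y hy
      exact deriv_add (hfd y hy) (hgd y hy)
    have hcast : ((n : ℕ) : WithTop ℕ∞) + 1 ≤ ((n+1 : ℕ) : WithTop ℕ∞) := by
      push_cast; exact le_rfl
    rw [iteratedDeriv_succ', Filter.EventuallyEq.iteratedDeriv_eq n hd,
      ihn (deriv f) (deriv g) (hf.deriv_of_isOpen hU hcast) (hg.deriv_of_isOpen hU hcast) x hx,
      iteratedDeriv_succ', iteratedDeriv_succ']

lemma pascal_sum (n : ℕ) (a b : ℕ → ℝ) :
    ∑ j ∈ Finset.range (n+1), (n.choose j : ℝ) * a (j+1) * b (n-j)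
      + ∑ j ∈ Finset.range (n+1), (n.choose j : ℝ) * a j * b (n-j+1)
    = ∑ j ∈ Finset.range (n+1+1), ((n+1).choose j : ℝ) * a j * b (n+1-j) := by
  set F : ℕ → ℝ := fun j => ((n+1).choose j : ℝ) * a j * b (n+1-j) with hF
  set G1 : ℕ → ℝ := fun j => (n.choose j : ℝ) * a (j+1) * b (n-j) with hG1
  set G2 : ℕ → ℝ := fun j => (n.choose j : ℝ) * a j * b (n-j+1) with hG2
  set H : ℕ → ℝ := fun j => (n.choose (j+1) : ℝ) * a (j+1) * b (n-j) with hH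
  set G2' : ℕ → ℝ := fun j => (n.choose j : ℝ) * a j * b (n+1-j) with hG2'
  rw [Finset.sum_range_succ' F (n+1)]
  have hF1 : ∀ j ∈ Finset.range (n+1), F (j+1) = G1 j + H j := by
    intro j hj
    rw [Finset.mem_range] at hj
    simp only [hF, hG1, hH]
    rw [Nat.choose_succ_succ, show n+1-(j+1) = n-j from by omega]
    push_cast; ring
  rw [Finset.sum_congr rfl hF1, Finset.sum_add_distrib]
  have hstep : ∑ j ∈ Finset.range (n+1), G2 j
      = ∑ j ∈ Finset.range (n+1), H j + F 0 := by
    have e1 : ∑ j ∈ Finset.range (n+1), G2 j = ∑ j ∈ Finset.range (n+1), G2' j := by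
      apply Finset.sum_congr rfl
      intro j hj
      rw [Finset.mem_range] at hj
      simp only [hG2, hG2']
      rw [show n+1-j = n-j+1 from by omega]
    have e2 : ∑ j ∈ Finset.range (n+1+1), G2' j = ∑ j ∈ Finset.range (n+1), G2' j := by
      rw [Finset.sum_range_succ]
      simp [hG2']
    have e3 := Finset.sum_range_succ' G2' (n+1)
    have e4 : ∀ j ∈ Finset.range (n+1), G2' (j+1) = H j := by
      intro j hj
      rw [Finset.mem_range] at hj
      simp only [hG2', hH]
      rw [show n+1-(j+1) = n-j from by omega]
    have e5 : G2' 0 = F 0 := by simp [hG2', hF]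
    rw [e2, Finset.sum_congr rfl e4, e5] at e3
    rw [e1, e3]
  rw [hstep]
  ring

lemma iteratedDeriv_mul_of_isOpen {U : Set ℝ} (hU : IsOpen U) :
    ∀ (n : ℕ) (f g : ℝ → ℝ), ContDiffOn ℝ (n : ℕ) f U → ContDiffOn ℝ (n : ℕ) g U →
      ∀ x ∈ U, iteratedDeriv n (fun t => f t * g t) x
        = ∑ j ∈ Finset.range (n+1),
            (n.choose j : ℝ) * iteratedDeriv j f x * iteratedDeriv (n-j) g x := by
  intro n
  induction n with
  | zero =>
    intro f g _ _ x _
    simp [iteratedDeriv_zero]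
  | succ n ihn =>
    intro f g hf hg x hx
    have h1 : (1 : WithTop ℕ∞) ≤ ((n+1 : ℕ) : WithTop ℕ∞) := by
      exact_mod_cast Nat.one_le_iff_ne_zero.mpr (Nat.succ_ne_zero n)
    have hfd : ∀ y ∈ U, DifferentiableAt ℝ f y := fun y hy =>
      ((hf.of_le h1).differentiableOn one_ne_zero).differentiableAt (hU.mem_nhds hy)
    have hgd : ∀ y ∈ U, DifferentiableAt ℝ g y := fun y hy =>
      ((hg.of_le h1).differentiableOn one_ne_zero).differentiableAt (hU.mem_nhds hy)
    have hd : deriv (fun t => f t * g t) =ᶠ[nhds x]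
        fun t => deriv f t * g t + f t * deriv g t := by
      filter_upwards [hU.mem_nhds hx] with y hy
      exact deriv_mul (hfd y hy) (hgd y hy)
    have hcast : ((n : ℕ) : WithTop ℕ∞) + 1 ≤ ((n+1 : ℕ) : WithTop ℕ∞) := by
      push_cast; exact le_rfl
    have hle : ((n : ℕ) : WithTop ℕ∞) ≤ ((n+1 : ℕ) : WithTop ℕ∞) := by
      exact_mod_cast Nat.le_succ n
    have hu1 : ContDiffOn ℝ (n : ℕ) (fun t => deriv f t * g t) U :=
      (hf.deriv_of_isOpen hU hcast).mul (hg.of_le hle)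
    have hu2 : ContDiffOn ℝ (n : ℕ) (fun t => f t * deriv g t) U :=
      (hf.of_le hle).mul (hg.deriv_of_isOpen hU hcast)
    rw [iteratedDeriv_succ', Filter.EventuallyEq.iteratedDeriv_eq n hd,
      iteratedDeriv_add_of_isOpen hU n _ _ hu1 hu2 x hx,
      ihn (deriv f) g (hf.deriv_of_isOpen hU hcast) (hg.of_le hle) x hx,
      ihn f (deriv g) (hf.of_le hle) (hg.deriv_of_isOpen hU hcast) x hx]
    simp_rw [← iteratedDeriv_succ']
    exact pascal_sum n (fun i => iteratedDeriv i f x) (fun i => iteratedDeriv i g x)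

end GhatAux

namespace GhatAux

lemma abstract_bound {Nf Ff : ℝ → ℝ} {m : ℕ} (hm1 : 1 ≤ m)
    (hNcd : ContDiff ℝ (m : ℕ) Nf) (hFcd : ContDiff ℝ (m : ℕ) Ff)
    {t₀ Δ aa R CN CF B1 : ℝ} {cf : ℕ → ℝ}
    (hΔ : 0 < Δ) (haa : 0 < aa) (hR1 : 1 ≤ R) (hΔR : Δ ≤ R)
    (hFk : aa * Δ ^ 2 ≤ Ff t₀)
    (hCN : |iteratedDeriv m Nf t₀| ≤ CN)
    (hCF0 : 0 ≤ CF) (hB10 : 0 ≤ B1)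
    (hBF : ∀ l, 1 ≤ l → l ≤ m → |iteratedDeriv l Ff t₀| ≤ CF)
    (hBF1 : |iteratedDeriv 1 Ff t₀| ≤ B1 * Δ)
    (hcf0 : ∀ j, 0 ≤ cf j)
    (hG : ∀ j, j < m → |iteratedDeriv j (fun t => Nf t / Ff t) t₀| ≤ cf j / Δ ^ (2+j)) :
    |iteratedDeriv m (fun t => Nf t / Ff t) t₀|
      ≤ ((CN * R ^ m
          + ∑ j ∈ Finset.range m, (m.choose j : ℝ) * cf j * ((CF + B1) * (1 + R ^ m))) / aa)
        / Δ ^ (2 + m) := by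
  have hFpos : 0 < Ff t₀ := lt_of_lt_of_le (mul_pos haa (pow_pos hΔ 2)) hFk
  have hR0 : (0:ℝ) ≤ R := le_trans zero_le_one hR1
  have hRm0 : (0:ℝ) ≤ R ^ m := pow_nonneg hR0 m
  set U : Set ℝ := {t | Ff t ≠ 0} with hU
  have hUopen : IsOpen U := by
    have he : U = Ff ⁻¹' ({0}ᶜ) := rfl
    rw [he]
    exact (hFcd.continuous).isOpen_preimage _ isOpen_compl_singleton
  have ht₀U : t₀ ∈ U := ne_of_gt hFpos
  have hGcd : ContDiffOn ℝ (m : ℕ) (fun t => Nf t / Ff t) U :=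
    ContDiffOn.div hNcd.contDiffOn hFcd.contDiffOn (fun t ht => ht)
  have hGFN : (fun t => (fun s => Nf s / Ff s) t * Ff t) =ᶠ[nhds t₀] Nf := by
    filter_upwards [hUopen.mem_nhds ht₀U] with y hy
    exact div_mul_cancel₀ (Nf y) hy
  have hNid : iteratedDeriv m Nf t₀ = ∑ j ∈ Finset.range (m+1),
      (m.choose j : ℝ) * iteratedDeriv j (fun t => Nf t / Ff t) t₀
        * iteratedDeriv (m-j) Ff t₀ := by
    rw [← hGFN.iteratedDeriv_eq m]
    exact iteratedDeriv_mul_of_isOpen hUopen m _ Ff hGcd hFcd.contDiffOn t₀ ht₀U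
  rw [Finset.sum_range_succ, Nat.sub_self, iteratedDeriv_zero, Nat.choose_self] at hNid
  set X : ℝ := iteratedDeriv m (fun t => Nf t / Ff t) t₀ with hX
  set Ssum : ℝ := ∑ j ∈ Finset.range m,
      (m.choose j : ℝ) * iteratedDeriv j (fun t => Nf t / Ff t) t₀
        * iteratedDeriv (m-j) Ff t₀ with hSsum
  have hXF : X * Ff t₀ = iteratedDeriv m Nf t₀ - Ssum := by
    rw [hNid]; push_cast; ring
  have hterm : ∀ j ∈ Finset.range m,
      |(m.choose j : ℝ) * iteratedDeriv j (fun t => Nf t / Ff t) t₀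
        * iteratedDeriv (m-j) Ff t₀| * Δ ^ m
      ≤ (m.choose j : ℝ) * cf j * ((CF + B1) * (1 + R ^ m)) := by
    intro j hj
    rw [Finset.mem_range] at hj
    have hPj : |iteratedDeriv j (fun t => Nf t / Ff t) t₀| * Δ ^ (2+j) ≤ cf j := by
      rw [← le_div_iff₀ (pow_pos hΔ _)]
      exact hG j hj
    set P : ℝ := |iteratedDeriv j (fun t => Nf t / Ff t) t₀| with hP
    set Q : ℝ := |iteratedDeriv (m-j) Ff t₀| with hQdef
    have hP0 : 0 ≤ P := abs_nonneg _
    have hQ0 : 0 ≤ Q := abs_nonneg _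
    have hCb : (0:ℝ) ≤ (m.choose j : ℝ) := Nat.cast_nonneg _
    have habs : |(m.choose j : ℝ) * iteratedDeriv j (fun t => Nf t / Ff t) t₀
        * iteratedDeriv (m-j) Ff t₀| = (m.choose j : ℝ) * P * Q := by
      rw [abs_mul, abs_mul, Nat.abs_cast]
    rw [habs]
    by_cases hl : m - j = 1
    · have hQb : Q ≤ B1 * Δ := by rw [hQdef, hl]; exact hBF1
      have hexp : 2 + j = m + 1 := by omega
      rw [hexp] at hPj
      have h1 : P * Δ ^ (m+1) * Q ≤ cf j * (B1 * Δ) :=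
        mul_le_mul hPj hQb hQ0 (hcf0 j)
      have step1 : ((m.choose j : ℝ) * P * Q * Δ ^ m) * Δ
          ≤ ((m.choose j : ℝ) * cf j * B1) * Δ := by
        calc ((m.choose j : ℝ) * P * Q * Δ ^ m) * Δ
            = (m.choose j : ℝ) * (P * Δ ^ (m+1) * Q) := by rw [pow_succ]; ring
          _ ≤ (m.choose j : ℝ) * (cf j * (B1 * Δ)) := mul_le_mul_of_nonneg_left h1 hCb
          _ = ((m.choose j : ℝ) * cf j * B1) * Δ := by ring
      have step2 : (m.choose j : ℝ) * P * Q * Δ ^ m ≤ (m.choose j : ℝ) * cf j * B1 :=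
        le_of_mul_le_mul_right step1 hΔ
      have hB1le : B1 ≤ (CF + B1) * (1 + R ^ m) := by
        nlinarith [mul_nonneg hCF0 hRm0, mul_nonneg hB10 hRm0]
      calc (m.choose j : ℝ) * P * Q * Δ ^ m ≤ (m.choose j : ℝ) * cf j * B1 := step2
        _ ≤ (m.choose j : ℝ) * cf j * ((CF + B1) * (1 + R ^ m)) := by
            exact mul_le_mul_of_nonneg_left hB1le (mul_nonneg hCb (hcf0 j))
    · have hl2 : 1 ≤ m - j := by omega
      have hQb : Q ≤ CF := hBF (m-j) hl2 (by omega)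
      have hΔm : Δ ^ m ≤ Δ ^ (2+j) * R ^ m := by
        have h1 : Δ ^ m = Δ ^ (2+j) * Δ ^ (m-(2+j)) := by
          rw [← pow_add]; congr 1; omega
        have h2 : Δ ^ (m-(2+j)) ≤ R ^ (m-(2+j)) := pow_le_pow_left₀ hΔ.le hΔR _
        have h3 : R ^ (m-(2+j)) ≤ R ^ m := pow_le_pow_right₀ hR1 (by omega)
        rw [h1]
        exact mul_le_mul_of_nonneg_left (h2.trans h3) (pow_nonneg hΔ.le _)
      have h1 : P * Δ ^ (2+j) * Q ≤ cf j * CF :=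
        mul_le_mul hPj hQb hQ0 (hcf0 j)
      calc (m.choose j : ℝ) * P * Q * Δ ^ m
          ≤ (m.choose j : ℝ) * P * Q * (Δ ^ (2+j) * R ^ m) := by
            exact mul_le_mul_of_nonneg_left hΔm
              (mul_nonneg (mul_nonneg hCb hP0) hQ0)
        _ = (m.choose j : ℝ) * ((P * Δ ^ (2+j) * Q) * R ^ m) := by ring
        _ ≤ (m.choose j : ℝ) * ((cf j * CF) * R ^ m) := by
            apply mul_le_mul_of_nonneg_left _ hCb
            exact mul_le_mul_of_nonneg_right h1 hRm0
        _ = ((m.choose j : ℝ) * cf j) * (CF * R ^ m) := by ring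
        _ ≤ ((m.choose j : ℝ) * cf j) * ((CF + B1) * (1 + R ^ m)) := by
            apply mul_le_mul_of_nonneg_left _ (mul_nonneg hCb (hcf0 j))
            nlinarith [mul_nonneg hB10 hRm0]
        _ = (m.choose j : ℝ) * cf j * ((CF + B1) * (1 + R ^ m)) := by ring
  have hCN0 : 0 ≤ CN := le_trans (abs_nonneg _) hCN
  have hmain : |X| * Ff t₀ * Δ ^ m
      ≤ CN * R ^ m + ∑ j ∈ Finset.range m,
          (m.choose j : ℝ) * cf j * ((CF + B1) * (1 + R ^ m)) := by
    have e1 : |X| * Ff t₀ = |X * Ff t₀| := by rw [abs_mul, abs_of_pos hFpos]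
    have e2 : |X * Ff t₀| ≤ |iteratedDeriv m Nf t₀| + |Ssum| := by
      rw [hXF]; exact abs_sub _ _
    have e3 : |Ssum| ≤ ∑ j ∈ Finset.range m,
        |(m.choose j : ℝ) * iteratedDeriv j (fun t => Nf t / Ff t) t₀
          * iteratedDeriv (m-j) Ff t₀| := by
      rw [hSsum]; exact Finset.abs_sum_le_sum_abs _ _
    have e4 : |iteratedDeriv m Nf t₀| * Δ ^ m ≤ CN * R ^ m :=
      mul_le_mul hCN (pow_le_pow_left₀ hΔ.le hΔR m) (pow_nonneg hΔ.le m) hCN0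
    have e5 : |Ssum| * Δ ^ m ≤ ∑ j ∈ Finset.range m,
        (m.choose j : ℝ) * cf j * ((CF + B1) * (1 + R ^ m)) := by
      calc |Ssum| * Δ ^ m ≤ (∑ j ∈ Finset.range m,
          |(m.choose j : ℝ) * iteratedDeriv j (fun t => Nf t / Ff t) t₀
            * iteratedDeriv (m-j) Ff t₀|) * Δ ^ m :=
            mul_le_mul_of_nonneg_right e3 (pow_nonneg hΔ.le m)
        _ = ∑ j ∈ Finset.range m,
            |(m.choose j : ℝ) * iteratedDeriv j (fun t => Nf t / Ff t) t₀
              * iteratedDeriv (m-j) Ff t₀| * Δ ^ m := Finset.sum_mul _ _ _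
        _ ≤ _ := Finset.sum_le_sum hterm
    calc |X| * Ff t₀ * Δ ^ m = |X * Ff t₀| * Δ ^ m := by rw [e1]
      _ ≤ (|iteratedDeriv m Nf t₀| + |Ssum|) * Δ ^ m :=
          mul_le_mul_of_nonneg_right e2 (pow_nonneg hΔ.le m)
      _ = |iteratedDeriv m Nf t₀| * Δ ^ m + |Ssum| * Δ ^ m := by ring
      _ ≤ _ := add_le_add e4 e5
  have hfin : |X| * (aa * Δ ^ 2 * Δ ^ m)
      ≤ CN * R ^ m + ∑ j ∈ Finset.range m,
          (m.choose j : ℝ) * cf j * ((CF + B1) * (1 + R ^ m)) := by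
    calc |X| * (aa * Δ ^ 2 * Δ ^ m) = (|X| * (aa * Δ ^ 2)) * Δ ^ m := by ring
      _ ≤ (|X| * Ff t₀) * Δ ^ m :=
          mul_le_mul_of_nonneg_right
            (mul_le_mul_of_nonneg_left hFk (abs_nonneg _)) (pow_nonneg hΔ.le m)
      _ ≤ _ := hmain
  rw [le_div_iff₀ (pow_pos hΔ (2+m)), le_div_iff₀ haa]
  calc |X| * Δ ^ (2+m) * aa = |X| * (aa * Δ ^ 2 * Δ ^ m) := by rw [pow_add]; ring
    _ ≤ _ := hfin

end GhatAux

/-- Derivative bounds for `Ĝ = ĝ/(1-Ĵ)` (Lemma 4.1 of the paper): with `M`-th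
moments of `J` and `g` finite, `Ĵ(0) = 1` and the infrared lower bound, one has
`|∂₁^m Ĝ(k)| ≤ c/|k|^{2+m}` for `1 ≤ m ≤ M`. Here the dimension is `d = d'+1 ≥ 1`. -/
theorem Ghat_derivative_bounds
    (d' : ℕ) (M : ℕ) (hM : 2 ≤ M) (K₀ : ℝ) (hK₀ : 0 < K₀)
    (J g : ℤ × (Fin d' → ℤ) → ℝ)
    (hJsymm : ZdSymmS J) (hgsymm : ZdSymmS g)
    (hmom : Summable (fun x => normZS x ^ M * (|J x| + |g x|)))
    (h1 : HasSum J 1)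
    (h2 : ∀ k ∈ boxS d',
      K₀ * normS k ^ 2 / (2 * ((d' : ℝ) + 1)) ≤ JhatS J 0 - JhatS J k) :
    ∀ m : ℕ, 1 ≤ m → m ≤ M → ∃ c : ℝ,
      ∀ k : ℝ × (Fin d' → ℝ), k ∈ boxS d' → k ≠ 0 →
        |iteratedDeriv m (fun t => GhatS J g (t, k.2)) k.1|
          ≤ c / normS k ^ (2 + m) := by
  classical
  -- summability of the moment series
  have hJmomS : Summable fun x : ℤ × (Fin d' → ℤ) => normZS x ^ M * |J x| := by
    apply Summable.of_nonneg_of_le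
      (fun x => mul_nonneg (pow_nonneg (GhatAux.normZS_nonneg _) _) (abs_nonneg _)) ?_ hmom
    intro x
    have hax : |J x| ≤ |J x| + |g x| := by linarith [abs_nonneg (g x)]
    exact mul_le_mul_of_nonneg_left hax (pow_nonneg (GhatAux.normZS_nonneg _) _)
  have hgmomS : Summable fun x : ℤ × (Fin d' → ℤ) => normZS x ^ M * |g x| := by
    apply Summable.of_nonneg_of_le
      (fun x => mul_nonneg (pow_nonneg (GhatAux.normZS_nonneg _) _) (abs_nonneg _)) ?_ hmom
    intro x
    have hax : |g x| ≤ |J x| + |g x| := by linarith [abs_nonneg (J x)]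
    exact mul_le_mul_of_nonneg_left hax (pow_nonneg (GhatAux.normZS_nonneg _) _)
  have hsJ : ∀ j, j ≤ M → Summable fun x : ℤ × (Fin d' → ℤ) => |J x| * |(x.1 : ℝ)| ^ j :=
    fun j hj => GhatAux.summable_abs_mul_pow hJmomS hj
  have hsg : ∀ j, j ≤ M → Summable fun x : ℤ × (Fin d' → ℤ) => |g x| * |(x.1 : ℝ)| ^ j :=
    fun j hj => GhatAux.summable_abs_mul_pow hgmomS hj
  -- identification of JhatS with the series Sser
  have hhat : ∀ (f : ℤ × (Fin d' → ℤ) → ℝ) (t : ℝ) (kv : Fin d' → ℝ),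
      JhatS f (t, kv) = GhatAux.Sser f kv 0 t := by
    intro f t kv
    rw [JhatS, GhatAux.Sser]
    apply tsum_congr
    intro x
    rw [pow_zero, mul_one]
    congr 1
    simp only [dotS, GhatAux.bvec]
    push_cast
    ring
  have hJ0 : JhatS J 0 = 1 := by
    rw [JhatS]
    have he : ∀ x : ℤ × (Fin d' → ℤ), J x * Real.cos (dotS (0 : ℝ × (Fin d' → ℝ)) x) = J x := by
      intro x
      have hd : dotS (0 : ℝ × (Fin d' → ℝ)) x = 0 := by
        simp [dotS]
      rw [hd, Real.cos_zero, mul_one]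
    rw [tsum_congr he]
    exact h1.tsum_eq
  set a : ℝ := K₀ / (2 * ((d' : ℝ) + 1)) with ha
  have ha_pos : 0 < a := by
    apply div_pos hK₀
    positivity
  have hFlow : ∀ k : ℝ × (Fin d' → ℝ), k ∈ boxS d' →
      a * normS k ^ 2 ≤ 1 - GhatAux.Sser J k.2 0 k.1 := by
    intro k hk
    have h := h2 k hk
    rw [hJ0] at h
    have he : JhatS J k = GhatAux.Sser J k.2 0 k.1 := by
      rw [← hhat J k.1 k.2, Prod.mk.eta]
    rw [he] at h
    have heq : a * normS k ^ 2 = K₀ * normS k ^ 2 / (2 * ((d' : ℝ) + 1)) := by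
      rw [ha]; ring
    linarith
  have hnormpos : ∀ k : ℝ × (Fin d' → ℝ), k ≠ 0 → 0 < normS k := by
    intro k hk
    rw [normS]
    apply Real.sqrt_pos.mpr
    have hsq : ∀ r : ℝ, r ≠ 0 → 0 < r ^ 2 :=
      fun r hr => lt_of_le_of_ne (sq_nonneg r) (Ne.symm (pow_ne_zero 2 hr))
    by_cases h1' : k.1 = 0
    · have h2' : k.2 ≠ 0 := fun h => hk (Prod.ext h1' h)
      obtain ⟨i, hi⟩ := Function.ne_iff.mp h2'
      have hpos := hsq _ hi
      have hsum : (k.2 i) ^ 2 ≤ ∑ j, (k.2 j) ^ 2 :=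
        Finset.single_le_sum (f := fun j => (k.2 j) ^ 2) (fun j _ => sq_nonneg _)
          (Finset.mem_univ i)
      nlinarith [sq_nonneg k.1]
    · have hpos := hsq _ h1'
      have hsum : (0:ℝ) ≤ ∑ j, (k.2 j) ^ 2 := Finset.sum_nonneg fun j _ => sq_nonneg _
      linarith
  have habs1 : ∀ k : ℝ × (Fin d' → ℝ), |k.1| ≤ normS k := by
    intro k
    rw [normS, ← Real.sqrt_sq_eq_abs]
    apply Real.sqrt_le_sqrt
    have : (0:ℝ) ≤ ∑ i, (k.2 i) ^ 2 := Finset.sum_nonneg fun i _ => sq_nonneg _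
    linarith
  set R : ℝ := Real.sqrt ((d' : ℝ) + 1) * Real.pi with hR
  have hsqrt1 : 1 ≤ Real.sqrt ((d' : ℝ) + 1) := by
    rw [Real.one_le_sqrt]
    have : (0:ℝ) ≤ (d' : ℝ) := Nat.cast_nonneg d'
    linarith
  have hR1 : 1 ≤ R := by
    rw [hR]
    nlinarith [Real.pi_gt_three]
  have hRnormle : ∀ k : ℝ × (Fin d' → ℝ), k ∈ boxS d' → normS k ≤ R := by
    intro k hk
    rw [boxS, Set.mem_prod] at hk
    obtain ⟨hk1, hk2⟩ := hk
    rw [Set.mem_Icc] at hk1 hk2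
    rw [normS, hR]
    have hb1 : k.1 ^ 2 ≤ Real.pi ^ 2 := by nlinarith [hk1.1, hk1.2]
    have hb2 : ∀ i, (k.2 i) ^ 2 ≤ Real.pi ^ 2 := by
      intro i
      have hl := hk2.1 i
      have hu := hk2.2 i
      simp only at hl hu
      nlinarith
    have hsum : ∑ i, (k.2 i) ^ 2 ≤ (d' : ℝ) * Real.pi ^ 2 := by
      calc ∑ i, (k.2 i) ^ 2 ≤ ∑ _i : Fin d', Real.pi ^ 2 :=
            Finset.sum_le_sum fun i _ => hb2 i
        _ = (d' : ℝ) * Real.pi ^ 2 := by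
            rw [Finset.sum_const, Finset.card_univ, Fintype.card_fin, nsmul_eq_mul]
    calc Real.sqrt (k.1 ^ 2 + ∑ i, (k.2 i) ^ 2)
        ≤ Real.sqrt (((d' : ℝ) + 1) * Real.pi ^ 2) := by
          apply Real.sqrt_le_sqrt
          nlinarith
      _ = Real.sqrt ((d' : ℝ) + 1) * Real.pi := by
          rw [Real.sqrt_mul (by positivity), Real.sqrt_sq Real.pi_pos.le]
  set CJmax : ℝ := ∑ l ∈ Finset.range (M+1), GhatAux.Cmom J l with hCJ
  have hCJmax_nonneg : 0 ≤ CJmax := by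
    rw [hCJ]
    exact Finset.sum_nonneg fun l _ => GhatAux.Cmom_nonneg J l
  have hCJle : ∀ l, l ≤ M → GhatAux.Cmom J l ≤ CJmax := by
    intro l hl
    rw [hCJ]
    exact Finset.single_le_sum (f := fun l => GhatAux.Cmom J l)
      (fun i _ => GhatAux.Cmom_nonneg J i) (Finset.mem_range.mpr (by omega))
  -- function identification
  have hGfun : ∀ kv : Fin d' → ℝ, (fun t => GhatS J g (t, kv))
      = fun t => GhatAux.Sser g kv 0 t / (1 - GhatAux.Sser J kv 0 t) := by
    intro kv
    funext t
    rw [GhatS, hhat g t kv, hhat J t kv]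
  -- main claim by strong induction
  have key : ∀ m : ℕ, m ≤ M → ∃ c : ℝ, 0 ≤ c ∧
      ∀ k : ℝ × (Fin d' → ℝ), k ∈ boxS d' → k ≠ 0 →
        |iteratedDeriv m (fun t => GhatS J g (t, k.2)) k.1| ≤ c / normS k ^ (2 + m) := by
    intro m
    induction m using Nat.strong_induction_on with
    | _ m ih =>
    intro hmM
    by_cases hm0 : m = 0
    · subst hm0
      refine ⟨GhatAux.Cmom g 0 / a, div_nonneg (GhatAux.Cmom_nonneg g 0) ha_pos.le, ?_⟩
      intro k hk hk0
      have hΔ := hnormpos k hk0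
      rw [hGfun k.2, iteratedDeriv_zero]
      have hF := hFlow k hk
      have hFpos : 0 < 1 - GhatAux.Sser J k.2 0 k.1 :=
        lt_of_lt_of_le (mul_pos ha_pos (pow_pos hΔ 2)) hF
      rw [abs_div, abs_of_pos hFpos]
      simp only [Nat.add_zero]
      calc |GhatAux.Sser g k.2 0 k.1| / (1 - GhatAux.Sser J k.2 0 k.1)
          ≤ GhatAux.Cmom g 0 / (a * normS k ^ 2) :=
            div_le_div₀ (GhatAux.Cmom_nonneg g 0)
              (GhatAux.abs_Sser_le g k.2 (hsg 0 (by omega)) k.1)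
              (mul_pos ha_pos (pow_pos hΔ 2)) hF
        _ = GhatAux.Cmom g 0 / a / normS k ^ 2 := by
            rw [div_div]
    · have hm1 : 1 ≤ m := Nat.one_le_iff_ne_zero.mpr hm0
      have ihc : ∀ j : ℕ, ∃ c : ℝ, 0 ≤ c ∧ (j < m →
          ∀ k : ℝ × (Fin d' → ℝ), k ∈ boxS d' → k ≠ 0 →
            |iteratedDeriv j (fun t => GhatS J g (t, k.2)) k.1| ≤ c / normS k ^ (2 + j)) := by
        intro j
        by_cases hj : j < m
        · obtain ⟨c, hc0, hcb⟩ := ih j hj (by omega)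
          exact ⟨c, hc0, fun _ => hcb⟩
        · exact ⟨0, le_rfl, fun h => absurd h hj⟩
      choose cf hcf0 hcfb using ihc
      have hR0 : (0:ℝ) ≤ R := le_trans zero_le_one hR1
      refine ⟨(GhatAux.Cmom g m * R ^ m
          + ∑ j ∈ Finset.range m, (m.choose j : ℝ) * cf j
              * ((CJmax + GhatAux.Cmom J 2) * (1 + R ^ m))) / a, ?_, ?_⟩
      · apply div_nonneg _ ha_pos.le
        apply add_nonneg
        · exact mul_nonneg (GhatAux.Cmom_nonneg g m) (pow_nonneg hR0 m)
        · apply Finset.sum_nonneg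
          intro j _
          apply mul_nonneg (mul_nonneg (Nat.cast_nonneg _) (hcf0 j))
          apply mul_nonneg (add_nonneg hCJmax_nonneg (GhatAux.Cmom_nonneg J 2))
          nlinarith [pow_nonneg hR0 m]
      · intro k hk hk0
        have hΔ := hnormpos k hk0
        have hΔR := hRnormle k hk
        rw [hGfun k.2]
        -- smoothness of the two series
        have hFcd : ContDiff ℝ (m : ℕ) (fun t => 1 - GhatAux.Sser J k.2 0 t) :=
          contDiff_const.sub (GhatAux.contDiff_Sser J k.2 hsJ m 0 (by omega))
        have hNcd : ContDiff ℝ (m : ℕ) (GhatAux.Sser g k.2 0) :=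
          GhatAux.contDiff_Sser g k.2 hsg m 0 (by omega)
        -- value and bound for iterated derivatives of the denominator
        have hFder : ∀ l, 1 ≤ l → l ≤ M →
            iteratedDeriv l (fun t => 1 - GhatAux.Sser J k.2 0 t)
              = fun t => -(GhatAux.Sser J k.2 l t) := by
          intro l hl1 hlM
          obtain ⟨l', rfl⟩ : ∃ l', l = l'+1 := ⟨l-1, by omega⟩
          rw [iteratedDeriv_succ']
          have hdF : deriv (fun t => 1 - GhatAux.Sser J k.2 0 t)
              = fun t => -(GhatAux.Sser J k.2 1 t) := by
            funext t
            exact ((GhatAux.hasDerivAt_Sser J k.2 (hsJ 1 (by omega)) (hsJ 0 (by omega))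
              t).const_sub 1).deriv
          rw [hdF]
          have hneg : iteratedDeriv l' (fun t => -(GhatAux.Sser J k.2 1 t))
              = fun t => -(iteratedDeriv l' (GhatAux.Sser J k.2 1) t) :=
            funext fun t => iteratedDeriv_neg l' _ t
          rw [hneg, GhatAux.iteratedDeriv_Sser J k.2 hsJ l' 1 (by omega),
            show 1 + l' = l' + 1 from by omega]
        have hBF : ∀ l, 1 ≤ l → l ≤ m →
            |iteratedDeriv l (fun t => 1 - GhatAux.Sser J k.2 0 t) k.1| ≤ CJmax := by
          intro l hl1 hlm
          have he : iteratedDeriv l (fun t => 1 - GhatAux.Sser J k.2 0 t) k.1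
              = -(GhatAux.Sser J k.2 l k.1) := by
            rw [hFder l hl1 (by omega)]
          rw [he, abs_neg]
          exact le_trans (GhatAux.abs_Sser_le J k.2 (hsJ l (by omega)) k.1)
            (hCJle l (by omega))
        have hBF1 : |iteratedDeriv 1 (fun t => 1 - GhatAux.Sser J k.2 0 t) k.1|
            ≤ GhatAux.Cmom J 2 * normS k := by
          have he : iteratedDeriv 1 (fun t => 1 - GhatAux.Sser J k.2 0 t) k.1
              = -(GhatAux.Sser J k.2 1 k.1) := by
            rw [hFder 1 le_rfl (by omega)]
          rw [he, abs_neg]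
          calc |GhatAux.Sser J k.2 1 k.1| ≤ GhatAux.Cmom J 2 * |k.1| :=
                GhatAux.abs_Sser_one_le J k.2 hJsymm.1 (hsJ 1 (by omega)) (hsJ 2 (by omega)) k.1
            _ ≤ GhatAux.Cmom J 2 * normS k :=
                mul_le_mul_of_nonneg_left (habs1 k) (GhatAux.Cmom_nonneg J 2)
        have hCN : |iteratedDeriv m (GhatAux.Sser g k.2 0) k.1| ≤ GhatAux.Cmom g m := by
          have hid : iteratedDeriv m (GhatAux.Sser g k.2 0) = GhatAux.Sser g k.2 m := by
            have h := GhatAux.iteratedDeriv_Sser g k.2 hsg m 0 (by omega)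
            rwa [Nat.zero_add] at h
          rw [hid]
          exact GhatAux.abs_Sser_le g k.2 (hsg m hmM) k.1
        have hG : ∀ j, j < m →
            |iteratedDeriv j (fun t => GhatAux.Sser g k.2 0 t
              / (1 - GhatAux.Sser J k.2 0 t)) k.1| ≤ cf j / normS k ^ (2 + j) := by
          intro j hj
          have h := hcfb j hj k hk hk0
          rwa [hGfun k.2] at h
        exact GhatAux.abstract_bound (Nf := GhatAux.Sser g k.2 0)
          (Ff := fun t => 1 - GhatAux.Sser J k.2 0 t) hm1 hNcd hFcd hΔ ha_pos hR1 hΔR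
          (hFlow k hk) hCN hCJmax_nonneg (GhatAux.Cmom_nonneg J 2) hBF hBF1 hcf0 hG
  intro m hm1 hmM
  obtain ⟨c, _, hc⟩ := key m hmM
  exact ⟨c, hc⟩

end
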